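/- Let H be a complex inner product space (inner product conjugate-linear in the first argument). Let g, b ∈ H be orthonormal (‖g‖ = ‖b‖ = 1 and ⟪g, b⟫ = 0), let θ ∈ ℝ, and set ψ = (sin θ) • g + (cos θ) • b. Let U : H →ₗ[ℂ] H be a linear map with U g = −g and U b = b, let R : H → H be the map R x = 2⟪ψ, x⟫ • ψ − x, and define the Grover operator G = R ∘ U. Then for every natural number t, G^t ψ = (sin((2t+1)θ)) • g + (cos((2t+1)θ)) • b. -/

import Mathlib

/-- Iterating the Grover operator t times rotates ψ from angle θ to
(2t+1)θ. -/
theorem grover_operator_iterated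
    {H : Type*} [NormedAddCommGroup H] [InnerProductSpace ℂ H]
    (g b : H) (hg : ‖g‖ = 1) (hb : ‖b‖ = 1) (hgb : (inner ℂ g b : ℂ) = 0)
    (θ : ℝ) (ψ : H) (hψ : ψ = (Real.sin θ : ℂ) • g + (Real.cos θ : ℂ) • b)
    (U : H →ₗ[ℂ] H) (hUg : U g = -g) (hUb : U b = b)
    (R : H → H) (hR : ∀ x, R x = (2 * (inner ℂ ψ x : ℂ)) • ψ - x)
    (G : H → H) (hG : G = R ∘ U) :
    ∀ t : ℕ, G^[t] ψ =
      (Real.sin ((2 * t + 1) * θ) : ℂ) • g +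
        (Real.cos ((2 * t + 1) * θ) : ℂ) • b := by
  have hbg : (inner ℂ b g : ℂ) = 0 := by rw [← inner_conj_symm, hgb, map_zero]
  have hgg : (inner ℂ g g : ℂ) = 1 := by
    rw [inner_self_eq_norm_sq_to_K, hg]; norm_num
  have hbb : (inner ℂ b b : ℂ) = 1 := by
    rw [inner_self_eq_norm_sq_to_K, hb]; norm_num
  have key : ∀ α : ℝ, G ((Real.sin α : ℂ) • g + (Real.cos α : ℂ) • b) =
      (Real.sin (α + 2 * θ) : ℂ) • g + (Real.cos (α + 2 * θ) : ℂ) • b := by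
    intro α
    have hUx : U ((Real.sin α : ℂ) • g + (Real.cos α : ℂ) • b) =
        -((Real.sin α : ℂ) • g) + (Real.cos α : ℂ) • b := by
      simp [map_add, map_smul, hUg, hUb, smul_neg]
    have hin : (inner ℂ ψ (U ((Real.sin α : ℂ) • g + (Real.cos α : ℂ) • b)) : ℂ)
        = (Real.cos (θ + α) : ℂ) := by
      rw [hUx, hψ]
      simp [inner_add_left, inner_add_right, inner_smul_left, inner_smul_right,
        inner_neg_right, hgg, hbb, hgb, hbg, Real.cos_add, hg, hb]
      rw [← Complex.sin_conj, ← Complex.cos_conj, Complex.conj_ofReal]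
      ring
    have hpyth := Real.sin_sq_add_cos_sq θ
    have t1 : Real.sin (α + 2 * θ) = 2 * Real.cos (θ + α) * Real.sin θ + Real.sin α := by
      rw [Real.sin_add, Real.cos_add, Real.sin_two_mul, Real.cos_two_mul]
      linear_combination 2 * Real.sin α * hpyth
    have t2 : Real.cos (α + 2 * θ) = 2 * Real.cos (θ + α) * Real.cos θ - Real.cos α := by
      rw [Real.cos_add, Real.cos_add, Real.sin_two_mul, Real.cos_two_mul]
      ring
    rw [hG, Function.comp_apply, hR, hin, hUx, hψ]
    have t1' : (Real.sin (α + 2 * θ) : ℂ)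
        = 2 * (Real.cos (θ + α) : ℂ) * (Real.sin θ : ℂ) + (Real.sin α : ℂ) := by
      rw [t1]; push_cast; ring
    have t2' : (Real.cos (α + 2 * θ) : ℂ)
        = 2 * (Real.cos (θ + α) : ℂ) * (Real.cos θ : ℂ) - (Real.cos α : ℂ) := by
      rw [t2]; push_cast; ring
    rw [t1', t2']
    module
  intro t
  induction t with
  | zero =>
      simpa using hψ
  | succ n ih =>
      rw [Function.iterate_succ_apply', ih, key]
      rw [show (2 * (n : ℝ) + 1) * θ + 2 * θ = (2 * ((n + 1 : ℕ) : ℝ) + 1) * θ by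
        push_cast; ring]
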